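/- Let T be a tree (a finite simple connected acyclic graph) on n vertices, bipartite with parts of sizes n_1 and n_2, n = n_1 + n_2. If n_1 ≤ n/4, then T is hypoenergetic: E(T) < n. -/

import Mathlib

open Matrix Finset

/-- The energy of the vertex `i` of a finite simple graph `G`:
the `(i,i)` entry of `|A| = (A Aᴴ)^{1/2}`, where `A` is the adjacency matrix. -/
noncomputable def vertexEnergy {n : ℕ} (G : SimpleGraph (Fin n)) [DecidableRel G.Adj]
    (i : Fin n) : ℝ :=
  ((Matrix.posSemidef_self_mul_conjTranspose (G.adjMatrix ℝ)).1.eigenvectorUnitary.1 *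
      diagonal (((↑) : ℝ → ℝ) ∘ (fun x => Real.sqrt x) ∘
        (Matrix.posSemidef_self_mul_conjTranspose (G.adjMatrix ℝ)).1.eigenvalues) *
      (star (Matrix.posSemidef_self_mul_conjTranspose (G.adjMatrix ℝ)).1.eigenvectorUnitary :
        Matrix (Fin n) (Fin n) ℝ)) i i

/-- The energy of a finite simple graph: the sum of the energies of its vertices. -/
noncomputable def graphEnergy {n : ℕ} (G : SimpleGraph (Fin n)) [DecidableRel G.Adj] : ℝ :=
  ∑ i, vertexEnergy G i

lemma my_rank_add_le {m : ℕ} (B C : Matrix (Fin m) (Fin m) ℝ) :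
    (B + C).rank ≤ B.rank + C.rank := by
  rw [Matrix.rank, Matrix.rank, Matrix.rank, Matrix.mulVecLin_add]
  have h : LinearMap.range (B.mulVecLin + C.mulVecLin) ≤
      LinearMap.range B.mulVecLin ⊔ LinearMap.range C.mulVecLin := by
    rintro x ⟨y, rfl⟩
    exact Submodule.add_mem_sup (LinearMap.mem_range_self _ y) (LinearMap.mem_range_self _ y)
  exact (Submodule.finrank_mono h).trans
    (Submodule.finrank_add_le_finrank_add_finrank _ _)

theorem stmt_17 {n : ℕ} (T : SimpleGraph (Fin n)) [DecidableRel T.Adj]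
    (htree : T.IsTree)
    (V₁ V₂ : Finset (Fin n)) (hdisj : Disjoint V₁ V₂) (hcover : V₁ ∪ V₂ = Finset.univ)
    (hbip : ∀ u v : Fin n, T.Adj u v → (u ∈ V₁ ∧ v ∈ V₂) ∨ (u ∈ V₂ ∧ v ∈ V₁))
    (n₁ n₂ : ℕ) (hn₁ : n₁ = V₁.card) (hn₂ : n₂ = V₂.card) (hn : n = n₁ + n₂)
    (hsmall : (n₁ : ℝ) ≤ (n : ℝ) / 4) :
    graphEnergy T < n := by
  classical
  have hn0 : 0 < n := by
    have : Nonempty (Fin n) := htree.isConnected.nonempty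
    exact Fin.pos_iff_nonempty.mpr this
  set A : Matrix (Fin n) (Fin n) ℝ := T.adjMatrix ℝ with hAdef
  set S : Matrix (Fin n) (Fin n) ℝ := A * Aᴴ with hSdef
  have hS : S.PosSemidef := Matrix.posSemidef_self_mul_conjTranspose A
  have hH : S.IsHermitian := hS.1
  set μ : Fin n → ℝ := hH.eigenvalues with hμdef
  -- trace under unitary conjugation
  have htr : ∀ (d : Fin n → ℝ),
      Matrix.trace ((hH.eigenvectorUnitary : Matrix (Fin n) (Fin n) ℝ) * Matrix.diagonal d *
        (star hH.eigenvectorUnitary : Matrix (Fin n) (Fin n) ℝ)) = ∑ i, d i := by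
    intro d
    rw [Matrix.trace_mul_cycle]
    have h1 : (star hH.eigenvectorUnitary : Matrix (Fin n) (Fin n) ℝ) *
        (hH.eigenvectorUnitary : Matrix (Fin n) (Fin n) ℝ) = 1 := by
      simpa using hH.eigenvectorUnitary.2.1
    rw [h1, one_mul, Matrix.trace_diagonal]
  -- energy as sum of square roots of eigenvalues
  have hE : graphEnergy T = ∑ i, Real.sqrt (μ i) := by
    have h0 : graphEnergy T = Matrix.trace ((hH.eigenvectorUnitary : Matrix (Fin n) (Fin n) ℝ) *
        diagonal (((↑) : ℝ → ℝ) ∘ (fun x => Real.sqrt x) ∘ hH.eigenvalues) *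
        (star hH.eigenvectorUnitary : Matrix (Fin n) (Fin n) ℝ)) := by
      rfl
    rw [h0, htr]
    rfl
  -- sum of eigenvalues is the trace
  have hsumμ : ∑ i, μ i = Matrix.trace S := by
    conv_rhs => rw [hH.trace_eq_sum_eigenvalues]
    rfl
  -- trace of S is twice the edge count
  have htrS : Matrix.trace S = 2 * (T.edgeFinset.card : ℝ) := by
    have h1 : Matrix.trace S = ∑ i, ∑ j, A i j * A i j := by
      simp [hSdef, Matrix.trace, Matrix.mul_apply, Matrix.conjTranspose_apply, Matrix.diag]
    have h2 : ∀ i j, A i j * A i j = if T.Adj i j then (1:ℝ) else 0 := by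
      intro i j; by_cases h : T.Adj i j <;> simp [hAdef, h]
    rw [h1]
    simp_rw [h2]
    rw [← Finset.sum_product']
    rw [Finset.sum_boole, Finset.univ_product_univ]
    have h3 := SimpleGraph.two_mul_card_edgeFinset (G := T)
    rw [show (Finset.univ.filter fun x : Fin n × Fin n => T.Adj x.1 x.2)
        = (Finset.univ.filter fun (x, y) => T.Adj x y) from rfl, ← h3]
    push_cast
    ring
  -- edge count of a tree
  have hecard : (T.edgeFinset.card : ℝ) + 1 = n := by
    have := htree.card_edgeFinset
    have h' : T.edgeFinset.card + 1 = n := by simpa using this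
    exact_mod_cast h'
  -- rank bound
  set D : Matrix (Fin n) (Fin n) ℝ :=
    Matrix.diagonal (fun i => if i ∈ V₁ then (1:ℝ) else 0) with hDdef
  set B : Matrix (Fin n) (Fin n) ℝ := D * A with hBdef
  have hBsplit : A = B + Bᵀ := by
    ext u v
    have hsym : A v u = A u v := by
      by_cases h : T.Adj u v
      · simp [hAdef, h, h.symm]
      · have h' : ¬ T.Adj v u := fun hc => h hc.symm
        simp [hAdef, h, h']
    have hBa : ∀ x y, B x y = (if x ∈ V₁ then (1:ℝ) else 0) * A x y := by
      intro x y; simp [hBdef, hDdef, Matrix.diagonal_mul]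
    by_cases h : T.Adj u v
    · rcases hbip u v h with ⟨hu, hv⟩ | ⟨hu, hv⟩
      · have hv1 : v ∉ V₁ := fun hx => (Finset.disjoint_left.mp hdisj hx hv)
        simp [Matrix.add_apply, Matrix.transpose_apply, hBa, hu, hv1, hsym]
      · have hu1 : u ∉ V₁ := fun hx => (Finset.disjoint_left.mp hdisj hx hu)
        simp [Matrix.add_apply, Matrix.transpose_apply, hBa, hu1, hv, hsym]
    · have hA0 : A u v = 0 := by simp [hAdef, h]
      have hA0' : A v u = 0 := by rw [hsym]; exact hA0
      simp [Matrix.add_apply, Matrix.transpose_apply, hBa, hA0, hA0']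
  have hrankD : D.rank ≤ n₁ := by
    rw [hDdef, Matrix.rank_diagonal, Fintype.card_subtype, hn₁]
    apply Finset.card_le_card
    intro i hi
    simp only [Finset.mem_filter] at hi
    by_contra hx
    exact hi.2 (by simp [hx])
  have hrankB : B.rank ≤ n₁ := (Matrix.rank_mul_le_left D A).trans hrankD
  have hrankBt : Bᵀ.rank ≤ n₁ := by rw [Matrix.rank_transpose]; exact hrankB
  have hrankA : A.rank ≤ 2 * n₁ := by
    calc A.rank = (B + Bᵀ).rank := by rw [← hBsplit]
    _ ≤ B.rank + Bᵀ.rank := my_rank_add_le B Bᵀ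
    _ ≤ 2 * n₁ := by omega
  have hrankS : S.rank ≤ 2 * n₁ := by
    rw [hSdef, Matrix.rank_self_mul_conjTranspose]; exact hrankA
  -- the set of nonzero eigenvalues
  set K : Finset (Fin n) := Finset.univ.filter (fun i => μ i ≠ 0) with hKdef
  have hKcard : K.card = S.rank := by
    rw [hH.rank_eq_card_non_zero_eigs, Fintype.card_subtype]
  have hμnn : ∀ i, 0 ≤ μ i := fun i => hS.eigenvalues_nonneg i
  -- Cauchy-Schwarz
  have hEK : graphEnergy T = ∑ i ∈ K, Real.sqrt (μ i) := by
    rw [hE, hKdef]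
    refine (Finset.sum_filter_of_ne ?_).symm
    intro i _ hne hz
    exact hne (by rw [hz, Real.sqrt_zero])
  have hCS : (graphEnergy T) ^ 2 ≤ (K.card : ℝ) * ∑ i ∈ K, μ i := by
    rw [hEK]
    have := sq_sum_le_card_mul_sum_sq (s := K) (f := fun i => Real.sqrt (μ i))
    refine this.trans (le_of_eq ?_)
    congr 1
    refine Finset.sum_congr rfl fun i _ => ?_
    rw [Real.sq_sqrt (hμnn i)]
  have hsumK : ∑ i ∈ K, μ i ≤ ∑ i, μ i :=
    Finset.sum_le_sum_of_subset_of_nonneg (Finset.filter_subset _ _)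
      (fun i _ _ => hμnn i)
  -- put everything together
  have hEnn : 0 ≤ graphEnergy T := by
    rw [hE]; exact Finset.sum_nonneg fun i _ => Real.sqrt_nonneg _
  set e : ℝ := (T.edgeFinset.card : ℝ) with hedef
  have he0 : 0 ≤ e := Nat.cast_nonneg _
  have hKle : (K.card : ℝ) ≤ 2 * n₁ := by
    rw [hKcard]; exact_mod_cast hrankS
  have hsum2e : ∑ i, μ i = 2 * e := by rw [hsumμ, htrS]
  have hfinal : (graphEnergy T) ^ 2 < (n : ℝ) ^ 2 := by
    have h1 : (graphEnergy T) ^ 2 ≤ (2 * n₁) * (2 * e) := by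
      calc (graphEnergy T) ^ 2 ≤ (K.card : ℝ) * ∑ i ∈ K, μ i := hCS
      _ ≤ (K.card : ℝ) * (2 * e) := by
          rw [← hsum2e]
          exact mul_le_mul_of_nonneg_left hsumK (Nat.cast_nonneg _)
      _ ≤ (2 * n₁) * (2 * e) := by
          apply mul_le_mul_of_nonneg_right hKle (by linarith)
    have hn1 : (1 : ℝ) ≤ n := by exact_mod_cast hn0
    nlinarith [hecard, hsmall, he0]
  exact lt_of_pow_lt_pow_left₀ 2 (Nat.cast_nonneg n) hfinal
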